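/- Let 0 < s ≤ 1, k ≥ 0, and 0 ≤ b < b'. Then for every t ≥ 0, ∫_t^∞ x^k · exp(−b'·x^s) dx ≤ Γ(1 + 1/s) · (k/(s·e))^{k/s} · (2/(b'−b))^{(k+1)/s} · exp(−b·t^s), where in the case k = 0 the factor (k/(s·e))^{k/s} is interpreted as 1. -/

import Mathlib

open Real MeasureTheory

lemma aux_sup {a : ℝ} (ha : 0 ≤ a) {y : ℝ} (hy : 0 ≤ y) :
    y ^ a * Real.exp (-y) ≤ (a / Real.exp 1) ^ a := by
  rcases ha.eq_or_lt with rfl | ha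
  · simp only [Real.rpow_zero, one_mul]
    exact Real.exp_le_one_iff.mpr (neg_nonpos.mpr hy)
  rcases hy.eq_or_lt with rfl | hy
  · rw [Real.zero_rpow ha.ne', zero_mul]
    positivity
  · rw [Real.rpow_def_of_pos hy, Real.rpow_def_of_pos (by positivity),
      Real.log_div ha.ne' (Real.exp_ne_zero 1), Real.log_exp, ← Real.exp_add]
    apply Real.exp_le_exp.mpr
    have h1 : Real.log (y / a) ≤ y / a - 1 := Real.log_le_sub_one_of_pos (by positivity)
    rw [Real.log_div hy.ne' ha.ne'] at h1
    have h2 : a * (Real.log y - Real.log a) ≤ a * (y / a - 1) :=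
      mul_le_mul_of_nonneg_left h1 ha.le
    have hya : a * (y / a) = y := by field_simp
    nlinarith [h2, hya]

lemma aux_integrable {c s : ℝ} (hs : 0 < s) (hc : 0 < c) :
    IntegrableOn (fun x : ℝ => Real.exp (-c * x ^ s)) (Set.Ioi 0) := by
  rw [← integrableOn_Ioi_comp_rpow_iff' _ (one_div_ne_zero hs.ne')]
  have h1s : 0 < 1 / s := by positivity
  have : IntegrableOn (fun x : ℝ => x ^ (1 / s - 1) * Real.exp (-c * x ^ (1:ℝ)))
      (Set.Ioi 0) := integrableOn_rpow_mul_exp_neg_mul_rpow (by linarith) one_pos hc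
  refine this.congr_fun (fun x hx => ?_) measurableSet_Ioi
  have hx0 : (0:ℝ) < x := hx
  rw [smul_eq_mul, ← Real.rpow_mul hx0.le, one_div_mul_cancel hs.ne']

/-- Tail integral estimate: for `0 < s ≤ 1`, `k ≥ 0`, `0 ≤ b < b'` and `t ≥ 0`,
`∫_t^∞ x^k exp(-b' x^s) dx ≤ Γ(1+1/s) (k/(s e))^{k/s} (2/(b'-b))^{(k+1)/s} exp(-b t^s)`.
(For `k = 0` the factor `(k/(s e))^{k/s} = 0^0 = 1` under `Real.rpow`.) -/
theorem tail_integral_estimate (s k b b' t : ℝ) (hs : 0 < s) (hs1 : s ≤ 1)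
    (hk : 0 ≤ k) (hb : 0 ≤ b) (hbb : b < b') (ht : 0 ≤ t) :
    ∫ x in Set.Ioi t, x ^ k * Real.exp (-b' * x ^ s) ≤
      Real.Gamma (1 + 1 / s) * (k / (s * Real.exp 1)) ^ (k / s) *
        (2 / (b' - b)) ^ ((k + 1) / s) * Real.exp (-b * t ^ s) := by
  set c : ℝ := (b' - b) / 2 with hcdef
  have hc : 0 < c := by rw [hcdef]; linarith
  have hbase : (0:ℝ) < 2 / (b' - b) := by apply div_pos two_pos; linarith
  have h2c : (2 / (b' - b)) = c⁻¹ := by rw [hcdef]; field_simp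
  set M : ℝ := (k / (s * Real.exp 1)) ^ (k / s) * (2 / (b' - b)) ^ (k / s) with hM
  have hMnn : 0 ≤ M :=
    mul_nonneg (Real.rpow_nonneg (div_nonneg hk (by positivity)) _)
      (Real.rpow_nonneg hbase.le _)
  -- pointwise bound
  have hbound : ∀ x ∈ Set.Ioi t,
      x ^ k * Real.exp (-b' * x ^ s) ≤ (M * Real.exp (-b * t ^ s)) * Real.exp (-c * x ^ s) := by
    intro x hx
    have hxt : t < x := hx
    have hx0 : 0 ≤ x := le_trans ht hxt.le
    have hxs : (0:ℝ) ≤ x ^ s := Real.rpow_nonneg hx0 _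
    have hsplit : -b' * x ^ s = -c * x ^ s + (-c * x ^ s + -b * x ^ s) := by
      rw [hcdef]; ring
    rw [hsplit, Real.exp_add, Real.exp_add, ← mul_assoc]
    have h1 : x ^ k * Real.exp (-c * x ^ s) ≤ M := by
      set y : ℝ := c * x ^ s with hy
      have hy0 : 0 ≤ y := by positivity
      have hxk : x ^ k = y ^ (k / s) * (2 / (b' - b)) ^ (k / s) := by
        rw [h2c, ← Real.mul_rpow hy0 (by positivity), hy, mul_comm c _, mul_assoc,
          mul_inv_cancel₀ hc.ne', mul_one, ← Real.rpow_mul hx0,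
          mul_div_cancel₀ _ hs.ne']
      rw [hxk, hM]
      have hsup := aux_sup (a := k / s) (by positivity) hy0
      have hne : -c * x ^ s = -y := by rw [hy]; ring
      rw [hne]
      calc y ^ (k / s) * (2 / (b' - b)) ^ (k / s) * Real.exp (-y)
          = (y ^ (k / s) * Real.exp (-y)) * (2 / (b' - b)) ^ (k / s) := by ring
        _ ≤ (k / s / Real.exp 1) ^ (k / s) * (2 / (b' - b)) ^ (k / s) :=
            mul_le_mul_of_nonneg_right hsup (Real.rpow_nonneg hbase.le _)
        _ = (k / (s * Real.exp 1)) ^ (k / s) * (2 / (b' - b)) ^ (k / s) := by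
            rw [div_div]
    have h3 : Real.exp (-b * x ^ s) ≤ Real.exp (-b * t ^ s) := by
      apply Real.exp_le_exp.mpr
      have : t ^ s ≤ x ^ s := Real.rpow_le_rpow ht hxt.le hs.le
      nlinarith
    have hexp2 : (0:ℝ) < Real.exp (-c * x ^ s) := Real.exp_pos _
    calc x ^ k * Real.exp (-c * x ^ s) * (Real.exp (-c * x ^ s) * Real.exp (-b * x ^ s))
        ≤ M * (Real.exp (-c * x ^ s) * Real.exp (-b * t ^ s)) := by
          apply mul_le_mul h1 (mul_le_mul le_rfl h3 (Real.exp_pos _).le hexp2.le)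
            (by positivity) hMnn
      _ = M * Real.exp (-b * t ^ s) * Real.exp (-c * x ^ s) := by ring
  -- integrability of the majorant
  have hint0 : IntegrableOn (fun x : ℝ => Real.exp (-c * x ^ s)) (Set.Ioi 0) :=
    aux_integrable hs hc
  have hint : IntegrableOn
      (fun x : ℝ => (M * Real.exp (-b * t ^ s)) * Real.exp (-c * x ^ s)) (Set.Ioi t) :=
    ((hint0.mono_set (Set.Ioi_subset_Ioi ht)).const_mul _)
  have step1 : ∫ x in Set.Ioi t, x ^ k * Real.exp (-b' * x ^ s) ≤
      ∫ x in Set.Ioi t, (M * Real.exp (-b * t ^ s)) * Real.exp (-c * x ^ s) := by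
    apply integral_mono_of_nonneg
    · filter_upwards [ae_restrict_mem measurableSet_Ioi] with x hx
      have hx0 : 0 ≤ x := le_trans ht (le_of_lt hx)
      positivity
    · exact hint
    · filter_upwards [ae_restrict_mem measurableSet_Ioi] with x hx
      exact hbound x hx
  have step2 : ∫ x in Set.Ioi t, (M * Real.exp (-b * t ^ s)) * Real.exp (-c * x ^ s) ≤
      ∫ x in Set.Ioi (0:ℝ), (M * Real.exp (-b * t ^ s)) * Real.exp (-c * x ^ s) := by
    apply setIntegral_mono_set (hint0.const_mul _)
    · filter_upwards with x using by positivity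
    · exact (Set.Ioi_subset_Ioi ht).eventuallyLE
  have step3 : ∫ x in Set.Ioi (0:ℝ), (M * Real.exp (-b * t ^ s)) * Real.exp (-c * x ^ s)
      = (M * Real.exp (-b * t ^ s)) * (c ^ (-1 / s) * Real.Gamma (1 / s + 1)) := by
    rw [integral_const_mul, integral_exp_neg_mul_rpow hs hc]
  have hcpow : c ^ (-1 / s : ℝ) = (2 / (b' - b)) ^ (1 / s : ℝ) := by
    rw [show (-1 / s : ℝ) = (-1) * (1 / s) by ring, Real.rpow_mul hc.le,
      Real.rpow_neg_one, ← h2c]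
  have hfin : (M * Real.exp (-b * t ^ s)) * (c ^ (-1 / s) * Real.Gamma (1 / s + 1)) =
      Real.Gamma (1 + 1 / s) * (k / (s * Real.exp 1)) ^ (k / s) *
        (2 / (b' - b)) ^ ((k + 1) / s) * Real.exp (-b * t ^ s) := by
    have hadd : (2 / (b' - b)) ^ (k / s : ℝ) * (2 / (b' - b)) ^ (1 / s : ℝ)
        = (2 / (b' - b)) ^ ((k + 1) / s : ℝ) := by
      rw [← Real.rpow_add hbase]
      ring_nf
    rw [hM, hcpow, add_comm (1/s) 1, ← hadd]
    ring
  linarith [step1, step2, step3.le, hfin.le]
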